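/- Let q ≥ 1, n ≥ 1, and let f, g be formal power series in q variables over ℝ with ord g = m ∈ ℕ, m > 0. Then g^n = f if and only if the following three families of identities hold: (i) for every multi-index c with |c| = m·n, f_c equals the sum of ∏_{i=1}^n g_{c^i} over all n-tuples of multi-indices with each |c^i| = m and c^1+…+c^n = c; (ii) for every c with |c| = m·n+1, f_c = n·Σ_{|b|=m+1, b≤c} g_b · Σ ∏_{i=1}^{n-1} g_{c^i}, the inner sum over (n−1)-tuples with each |c^i| = m and sum c−b; (iii) for every k ≥ 2 and every c with |c| = m·n+k, f_c = (Σ ∏_{i=1}^n g_{c^i} over n-tuples with m ≤ |c^i| ≤ m+k−1 and sum c) + n·Σ_{|b|=m+k, b≤c} g_b · Σ ∏_{i=1}^{n-1} g_{c^i} (inner sum over (n−1)-tuples with each |c^i| = m and sum c−b); together with f_c = 0 for every c with |c| < m·n. -/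

import Mathlib

open Finset MvPowerSeries
open scoped Classical

namespace NthRootAux

variable {q : ℕ}

lemma deg_sum {ι : Type*} (s : Finset ι) (d : ι → (Fin q →₀ ℕ)) :
    Finsupp.degree (∑ i ∈ s, d i) = ∑ i ∈ s, Finsupp.degree (d i) := by
  simp only [Finsupp.degree_eq_weight_one]
  exact map_sum (Finsupp.weight 1) d s

lemma all_eq_of_sum_le {ι : Type*} {s : Finset ι} {f : ι → ℕ} {m : ℕ}
    (h : ∀ i ∈ s, m ≤ f i) (hs : ∑ i ∈ s, f i ≤ s.card * m) :
    ∀ i ∈ s, f i = m := by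
  by_contra hc
  push_neg at hc
  obtain ⟨i, hi, hne⟩ := hc
  have hlt : s.card * m < ∑ i ∈ s, f i := by
    simpa [mul_comm] using Finset.sum_lt_sum h ⟨i, hi, lt_of_le_of_ne (h i hi) (Ne.symm hne)⟩
  exact absurd hs (not_le.mpr hlt)

noncomputable def TT (N : ℕ) (c : Fin q →₀ ℕ) : Finset (Fin N → (Fin q →₀ ℕ)) :=
  (Finset.finsuppAntidiag (Finset.univ : Finset (Fin N)) c).image ⇑Finsupp.equivFunOnFinite

lemma mem_TT {N : ℕ} {c : Fin q →₀ ℕ} {d : Fin N → (Fin q →₀ ℕ)} :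
    d ∈ TT N c ↔ ∑ i, d i = c := by
  simp only [TT, Finset.mem_image]
  constructor
  · rintro ⟨l, hl, rfl⟩
    rw [Finset.mem_finsuppAntidiag] at hl
    exact hl.1
  · intro h
    refine ⟨Finsupp.equivFunOnFinite.symm d, ?_, Finsupp.equivFunOnFinite.apply_symm_apply d⟩
    rw [Finset.mem_finsuppAntidiag]
    exact ⟨h, Finset.subset_univ _⟩

lemma coeff_TT {N : ℕ} (g : MvPowerSeries (Fin q) ℝ) (c : Fin q →₀ ℕ) :
    coeff c (g ^ N) = ∑ d ∈ TT N c, ∏ i, coeff (d i) g := by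
  have h : g ^ N = ∏ _i : Fin N, g := by simp
  rw [h, coeff_prod, TT, Finset.sum_image
    (fun a _ b _ h => Finsupp.equivFunOnFinite.injective h)]
  rfl

lemma coeff_g_zero {m : ℕ} {g : MvPowerSeries (Fin q) ℝ} (hord : g.order = (m : ℕ∞))
    {b : Fin q →₀ ℕ} (hb : b.degree < m) : coeff b g = 0 := by
  apply coeff_of_lt_order
  rw [hord]
  exact_mod_cast hb

lemma L0 {n m : ℕ} (g : MvPowerSeries (Fin q) ℝ) (hord : g.order = (m : ℕ∞))
    {c : Fin q →₀ ℕ} (hc : c.degree < m * n) :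
    coeff c (g ^ n) = 0 := by
  rw [coeff_TT]
  apply Finset.sum_eq_zero
  intro d hd
  rw [mem_TT] at hd
  have hsum : ∑ i, (d i).degree = c.degree := by rw [← deg_sum, hd]
  have hex : ∃ i ∈ (Finset.univ : Finset (Fin n)), (d i).degree < m := by
    apply Finset.exists_lt_of_sum_lt
    simp only [Finset.sum_const, Finset.card_univ, Fintype.card_fin, smul_eq_mul]
    rw [hsum, Nat.mul_comm n m]
    exact hc
  obtain ⟨i, _, hi⟩ := hex
  exact Finset.prod_eq_zero (Finset.mem_univ i) (coeff_g_zero hord hi)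

lemma L1 {n m : ℕ} (g : MvPowerSeries (Fin q) ℝ) (hord : g.order = (m : ℕ∞))
    {c : Fin q →₀ ℕ} (hc : c.degree = m * n) :
    coeff c (g ^ n) =
      ∑ᶠ (d : Fin n → (Fin q →₀ ℕ)) (_ : (∀ i, (d i).degree = m) ∧ ∑ i, d i = c),
        ∏ i, coeff (d i) g := by
  rw [finsum_cond_eq_sum_of_cond_iff _
    (t := (TT n c).filter fun d => ∀ i, (d i).degree = m)
    (fun {d} _ => by simp [Finset.mem_filter, mem_TT, and_comm])]
  rw [coeff_TT]
  apply (Finset.sum_subset (Finset.filter_subset _ _) ?_).symm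
  intro d hd hnd
  have hd' := hd
  rw [mem_TT] at hd'
  simp only [Finset.mem_filter, hd, true_and, not_forall] at hnd
  by_cases hge : ∀ i, m ≤ (d i).degree
  · exfalso
    obtain ⟨i, hi⟩ := hnd
    apply hi
    refine all_eq_of_sum_le (fun i _ => hge i) ?_ i (Finset.mem_univ i)
    rw [← deg_sum, hd', hc, Finset.card_univ, Fintype.card_fin, Nat.mul_comm]
  · push_neg at hge
    obtain ⟨i, hi⟩ := hge
    exact Finset.prod_eq_zero (Finset.mem_univ i) (coeff_g_zero hord hi)


lemma L3 {n' m : ℕ} (hm : 0 < m) (g : MvPowerSeries (Fin q) ℝ)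
    {c : Fin q →₀ ℕ} (hc : c.degree = m * (n' + 1) + 1) :
    (∑ᶠ (d : Fin (n' + 1) → (Fin q →₀ ℕ))
      (_ : (∀ i, m ≤ (d i).degree ∧ (d i).degree ≤ m + 1 - 1) ∧ ∑ i, d i = c),
      ∏ i, coeff (d i) g) = 0 := by
  rw [finsum_cond_eq_sum_of_cond_iff _ (t := (∅ : Finset _)) ?_, Finset.sum_empty]
  intro d _
  simp only [Finset.notMem_empty, iff_false, not_and]
  intro h1 h2
  have hdeg : ∑ i, (d i).degree = c.degree := by rw [← deg_sum, h2]
  have hall : ∀ i ∈ Finset.univ, (fun i => (d i).degree) i = m := fun i _ =>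
    le_antisymm (by simpa using (h1 i).2) (h1 i).1
  rw [Finset.sum_congr rfl hall, Finset.sum_const, Finset.card_univ, Fintype.card_fin,
    smul_eq_mul, hc, Nat.mul_comm] at hdeg
  simp at hdeg

lemma L2 {n' m k : ℕ} (hm : 0 < m) (hk : 1 ≤ k) (g : MvPowerSeries (Fin q) ℝ)
    (hord : g.order = (m : ℕ∞)) {c : Fin q →₀ ℕ} (hc : c.degree = m * (n' + 1) + k) :
    coeff c (g ^ (n' + 1)) =
      (∑ᶠ (d : Fin (n' + 1) → (Fin q →₀ ℕ))
        (_ : (∀ i, m ≤ (d i).degree ∧ (d i).degree ≤ m + k - 1) ∧ ∑ i, d i = c),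
        ∏ i, coeff (d i) g)
      + ((n' + 1 : ℕ) : ℝ) * ∑ᶠ (b : Fin q →₀ ℕ) (_ : b.degree = m + k ∧ b ≤ c),
          coeff b g *
            ∑ᶠ (e : Fin n' → (Fin q →₀ ℕ))
              (_ : (∀ i, (e i).degree = m) ∧ ∑ i, e i = c - b),
              ∏ i, coeff (e i) g := by
  obtain ⟨M, hM⟩ : ∃ M, M = m * n' := ⟨_, rfl⟩
  have hc' : c.degree = M + m + k := by rw [hc, hM]; ring
  set S₁ : Finset (Fin (n' + 1) → (Fin q →₀ ℕ)) :=
    (TT (n' + 1) c).filter (fun d => ∀ i, m ≤ (d i).degree ∧ (d i).degree ≤ m + k - 1) with hS₁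
  set B : Finset (Fin q →₀ ℕ) := (Finset.Iic c).filter (fun b => b.degree = m + k) with hB
  have hinner : ∀ b : Fin q →₀ ℕ,
      (∑ᶠ (e : Fin n' → (Fin q →₀ ℕ))
        (_ : (∀ i, (e i).degree = m) ∧ ∑ i, e i = c - b), ∏ i, coeff (e i) g)
      = ∑ e ∈ (TT n' (c - b)).filter (fun e => ∀ i, (e i).degree = m),
          ∏ i, coeff (e i) g := fun b =>
    finsum_cond_eq_sum_of_cond_iff _ (fun {e} _ => by
      simp [Finset.mem_filter, mem_TT, and_comm])
  have hfirst : (∑ᶠ (d : Fin (n' + 1) → (Fin q →₀ ℕ))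
      (_ : (∀ i, m ≤ (d i).degree ∧ (d i).degree ≤ m + k - 1) ∧ ∑ i, d i = c),
      ∏ i, coeff (d i) g) = ∑ d ∈ S₁, ∏ i, coeff (d i) g :=
    finsum_cond_eq_sum_of_cond_iff _ (fun {d} _ => by
      simp [hS₁, Finset.mem_filter, mem_TT, and_comm])
  simp_rw [hinner]
  have houter : (∑ᶠ (b : Fin q →₀ ℕ) (_ : b.degree = m + k ∧ b ≤ c),
      coeff b g * ∑ e ∈ (TT n' (c - b)).filter (fun e => ∀ i, (e i).degree = m),
        ∏ i, coeff (e i) g)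
      = ∑ b ∈ B, coeff b g *
          ∑ e ∈ (TT n' (c - b)).filter (fun e => ∀ i, (e i).degree = m),
            ∏ i, coeff (e i) g :=
    finsum_cond_eq_sum_of_cond_iff _ (fun {b} _ => by
      simp [hB, Finset.mem_filter, Finset.mem_Iic, and_comm])
  rw [hfirst, houter, coeff_TT]
  set S₂ : Fin (n' + 1) → Finset (Fin (n' + 1) → (Fin q →₀ ℕ)) := fun j =>
    (TT (n' + 1) c).filter
      (fun d => (d j).degree = m + k ∧ ∀ i, i ≠ j → (d i).degree = m) with hS₂
  have hdisj : Set.PairwiseDisjoint (↑(Finset.univ : Finset (Fin (n' + 1)))) S₂ := by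
    intro j _ j' _ hjj'
    rw [Function.onFun, Finset.disjoint_left]
    intro d hd hd'
    simp only [hS₂, Finset.mem_filter] at hd hd'
    have h1 := hd.2.1
    have h2 := hd'.2.2 j hjj'
    omega
  have hdisj2 : Disjoint S₁ (Finset.univ.biUnion S₂) := by
    rw [Finset.disjoint_left]
    intro d hd1 hd2
    simp only [hS₁, Finset.mem_filter] at hd1
    simp only [Finset.mem_biUnion, hS₂, Finset.mem_filter] at hd2
    obtain ⟨j, -, -, hdj, -⟩ := hd2
    have := (hd1.2 j).2
    omega
  have hsub : S₁ ∪ Finset.univ.biUnion S₂ ⊆ TT (n' + 1) c := by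
    apply Finset.union_subset
    · rw [hS₁]; exact Finset.filter_subset _ _
    · rw [Finset.biUnion_subset]
      intro j _
      rw [hS₂]
      exact Finset.filter_subset _ _
  have hvanish : ∀ d ∈ TT (n' + 1) c, d ∉ S₁ ∪ Finset.univ.biUnion S₂ →
      ∏ i, coeff (d i) g = 0 := by
    intro d hd hnd
    have hd' : ∑ i, d i = c := mem_TT.mp hd
    have hdeg : ∑ i, (d i).degree = M + m + k := by rw [← deg_sum, hd', hc']
    by_cases hge : ∀ i, m ≤ (d i).degree
    · exfalso
      apply hnd
      by_cases hle : ∀ i, (d i).degree ≤ m + k - 1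
      · exact Finset.mem_union_left _ (Finset.mem_filter.mpr ⟨hd, fun i => ⟨hge i, hle i⟩⟩)
      · push_neg at hle
        obtain ⟨j, hj⟩ := hle
        have hj' : m + k ≤ (d j).degree := by omega
        have hsplit : (d j).degree + ∑ i : Fin n', (d (j.succAbove i)).degree = M + m + k := by
          rw [← hdeg, Fin.sum_univ_succAbove (fun i => (d i).degree) j]
        have hrest : ∑ i : Fin n', (d (j.succAbove i)).degree ≤ M := by omega
        have hall : ∀ i ∈ Finset.univ, (fun i => (d (j.succAbove i)).degree) i = m := by
          apply all_eq_of_sum_le (fun i _ => hge _)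
          rw [Finset.card_univ, Fintype.card_fin, Nat.mul_comm, ← hM]
          exact hrest
        have hsum' : ∑ i : Fin n', (d (j.succAbove i)).degree = n' * m := by
          rw [Finset.sum_congr rfl hall, Finset.sum_const, Finset.card_univ,
            Fintype.card_fin, smul_eq_mul]
        have hM' : n' * m = M := by rw [hM, Nat.mul_comm]
        have hdj : (d j).degree = m + k := by omega
        refine Finset.mem_union_right _ (Finset.mem_biUnion.mpr
          ⟨j, Finset.mem_univ j, Finset.mem_filter.mpr ⟨hd, hdj, ?_⟩⟩)
        intro i hij
        obtain ⟨i', rfl⟩ := Fin.exists_succAbove_eq hij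
        exact hall i' (Finset.mem_univ i')
    · push_neg at hge
      obtain ⟨i, hi⟩ := hge
      exact Finset.prod_eq_zero (Finset.mem_univ i) (coeff_g_zero hord hi)
  have key : ∑ d ∈ TT (n' + 1) c, ∏ i, coeff (d i) g
      = ∑ d ∈ S₁, ∏ i, coeff (d i) g
        + ∑ j : Fin (n' + 1), ∑ d ∈ S₂ j, ∏ i, coeff (d i) g := by
    rw [← Finset.sum_biUnion hdisj, ← Finset.sum_union hdisj2]
    exact (Finset.sum_subset hsub hvanish).symm
  have hperj : ∀ j : Fin (n' + 1), ∑ d ∈ S₂ j, ∏ i, coeff (d i) g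
      = ∑ b ∈ B, coeff b g *
          ∑ e ∈ (TT n' (c - b)).filter (fun e => ∀ i, (e i).degree = m),
            ∏ i, coeff (e i) g := by
    intro j
    simp_rw [Finset.mul_sum]
    rw [Finset.sum_sigma']
    refine Finset.sum_nbij' (fun d => ⟨d j, fun i => d (j.succAbove i)⟩)
      (fun p => j.insertNth p.1 p.2) ?_ ?_ ?_ ?_ ?_
    · intro d hd
      simp only [hS₂, Finset.mem_filter, mem_TT] at hd
      obtain ⟨hdsum, hdj, hrest⟩ := hd
      have hsplit : d j + ∑ i : Fin n', d (j.succAbove i) = c := by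
        rw [← hdsum, Fin.sum_univ_succAbove d j]
      refine Finset.mem_sigma.mpr ⟨?_, ?_⟩
      · simp only [hB, Finset.mem_filter, Finset.mem_Iic]
        exact ⟨le_iff_exists_add.mpr ⟨_, hsplit.symm⟩, hdj⟩
      · simp only [Finset.mem_filter, mem_TT]
        refine ⟨eq_tsub_of_add_eq ?_, fun i => hrest _ (Fin.succAbove_ne j i)⟩
        rw [add_comm]; exact hsplit
    · rintro ⟨b, e⟩ hp
      simp only [Finset.mem_sigma, hB, Finset.mem_filter, Finset.mem_Iic, mem_TT] at hp
      obtain ⟨⟨hbc, hbdeg⟩, hesum, hedeg⟩ := hp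
      simp only [hS₂, Finset.mem_filter, mem_TT]
      refine ⟨?_, ?_, ?_⟩
      · rw [Fin.sum_univ_succAbove _ j]
        simp only [Fin.insertNth_apply_same, Fin.insertNth_apply_succAbove]
        rw [hesum, add_tsub_cancel_of_le hbc]
      · simp [Fin.insertNth_apply_same, hbdeg]
      · intro i hij
        obtain ⟨i', rfl⟩ := Fin.exists_succAbove_eq hij
        rw [Fin.insertNth_apply_succAbove]
        exact hedeg i'
    · intro d _
      exact Fin.insertNth_self_removeNth j d
    · rintro ⟨b, e⟩ _
      simp [Fin.insertNth_apply_same, Fin.insertNth_apply_succAbove]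
    · intro d _
      exact Fin.prod_univ_succAbove (fun i => coeff (d i) g) j
  rw [key]
  congr 1
  rw [Finset.sum_congr rfl (fun j _ => hperj j), Finset.sum_const, Finset.card_univ,
    Fintype.card_fin, nsmul_eq_mul]

end NthRootAux


/-- Characterization of `n`-th roots: if `g` has positive order `m`, then `g ^ n = f`
if and only if the coefficients of `f` satisfy the system of equations (i)-(iii)
from the paper (together with the vanishing of all coefficients of degree `< m·n`). -/
theorem nthRoot_iff_coeff_system {q n m : ℕ} (hq : 1 ≤ q) (hn : 1 ≤ n) (hm : 0 < m)
    (f g : MvPowerSeries (Fin q) ℝ) (hord : g.order = (m : ℕ∞)) :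
    g ^ n = f ↔
      ((∀ c : Fin q →₀ ℕ, c.degree < m * n → MvPowerSeries.coeff c f = 0) ∧
       (∀ c : Fin q →₀ ℕ, c.degree = m * n →
          MvPowerSeries.coeff c f =
            ∑ᶠ (d : Fin n → (Fin q →₀ ℕ))
              (_ : (∀ i, (d i).degree = m) ∧ ∑ i, d i = c),
              ∏ i, MvPowerSeries.coeff (d i) g) ∧
       (∀ c : Fin q →₀ ℕ, c.degree = m * n + 1 →
          MvPowerSeries.coeff c f =
            (n : ℝ) * ∑ᶠ (b : Fin q →₀ ℕ) (_ : b.degree = m + 1 ∧ b ≤ c),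
              MvPowerSeries.coeff b g *
                ∑ᶠ (d : Fin (n - 1) → (Fin q →₀ ℕ))
                  (_ : (∀ i, (d i).degree = m) ∧ ∑ i, d i = c - b),
                  ∏ i, MvPowerSeries.coeff (d i) g) ∧
       (∀ k : ℕ, 2 ≤ k → ∀ c : Fin q →₀ ℕ, c.degree = m * n + k →
          MvPowerSeries.coeff c f =
            (∑ᶠ (d : Fin n → (Fin q →₀ ℕ))
              (_ : (∀ i, m ≤ (d i).degree ∧ (d i).degree ≤ m + k - 1) ∧ ∑ i, d i = c),
              ∏ i, MvPowerSeries.coeff (d i) g)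
            + (n : ℝ) * ∑ᶠ (b : Fin q →₀ ℕ) (_ : b.degree = m + k ∧ b ≤ c),
                MvPowerSeries.coeff b g *
                  ∑ᶠ (d : Fin (n - 1) → (Fin q →₀ ℕ))
                    (_ : (∀ i, (d i).degree = m) ∧ ∑ i, d i = c - b),
                    ∏ i, MvPowerSeries.coeff (d i) g)) := by
  obtain ⟨n', rfl⟩ : ∃ n', n = n' + 1 := ⟨n - 1, by omega⟩
  constructor
  · rintro rfl
    refine ⟨fun c hc => NthRootAux.L0 g hord hc, fun c hc => NthRootAux.L1 g hord hc,
      fun c hc => ?_, fun k hk c hc => ?_⟩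
    · have hg := NthRootAux.L2 hm le_rfl g hord hc
      rw [NthRootAux.L3 hm g hc, zero_add] at hg
      exact hg
    · exact NthRootAux.L2 hm (by omega) g hord hc
  · rintro ⟨h1, h2, h3, h4⟩
    ext c
    by_cases hlt : c.degree < m * (n' + 1)
    · rw [NthRootAux.L0 g hord hlt, h1 c hlt]
    · obtain ⟨k, hck⟩ : ∃ k, c.degree = m * (n' + 1) + k := ⟨c.degree - m * (n' + 1), by omega⟩
      rcases k with _ | _ | k
      · have hck' : c.degree = m * (n' + 1) := by omega
        rw [NthRootAux.L1 g hord hck', h2 c hck']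
      · have hck' : c.degree = m * (n' + 1) + 1 := by omega
        have hg := NthRootAux.L2 hm le_rfl g hord hck'
        rw [NthRootAux.L3 hm g hck', zero_add] at hg
        rw [h3 c hck']
        exact hg
      · have hck' : c.degree = m * (n' + 1) + (k + 2) := by omega
        have hg := NthRootAux.L2 hm (by omega) g hord hck'
        rw [h4 (k + 2) (by omega) c hck']
        exact hg
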